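/- Let {e_1,…,e_d} and {f_1,…,f_d} be two orthonormal bases of ℂ^d such that ⟨e_k, f_l⟩ ≠ 0 for all k, l. Define the channel E on ℂ²⊗ℂ^d with the 4d Kraus operators (1/√2)|0⟩⟨0|⊗|e_k⟩⟨e_k|, (1/√2)|1⟩⟨+|⊗|e_k⟩⟨e_k|, (1/√2)|0⟩⟨1|⊗|f_k⟩⟨e_k|, (1/√2)|1⟩⟨−|⊗|f_k⟩⟨e_k| (k = 1,…,d), where |±⟩ = (|0⟩±|1⟩)/√2. This is a valid Kraus family (the operators satisfy the completeness relation on ℂ²⊗ℂ^d), and α(E) = 1: for all unit vectors ψ, φ ∈ ℂ²⊗ℂ^d, tr[E(|ψ⟩⟨ψ|)·E(|φ⟩⟨φ|)] ≠ 0. -/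

import Mathlib

open Matrix Kronecker

/-- The quantum channel associated with a Kraus family: `ρ ↦ ∑ k, E k * ρ * (E k)ᴴ`. -/
noncomputable def channelApply {ι m n : Type*} [Fintype ι] [Fintype m] [Fintype n]
    (E : ι → Matrix m n ℂ) (ρ : Matrix n n ℂ) : Matrix m m ℂ :=
  ∑ k, E k * ρ * (E k)ᴴ

/-- `|0⟩ ∈ ℂ²`. -/
noncomputable def ket0 : Fin 2 → ℂ := ![1, 0]

/-- `|1⟩ ∈ ℂ²`. -/
noncomputable def ket1 : Fin 2 → ℂ := ![0, 1]

/-- `|+⟩ = (|0⟩ + |1⟩)/√2`. -/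
noncomputable def ketP : Fin 2 → ℂ := ![(Real.sqrt 2 : ℂ)⁻¹, (Real.sqrt 2 : ℂ)⁻¹]

/-- `|−⟩ = (|0⟩ − |1⟩)/√2`. -/
noncomputable def ketM : Fin 2 → ℂ := ![(Real.sqrt 2 : ℂ)⁻¹, -(Real.sqrt 2 : ℂ)⁻¹]

/-- The `4d` Kraus operators `(1/√2)|0⟩⟨0|⊗|e_k⟩⟨e_k|`, `(1/√2)|1⟩⟨+|⊗|e_k⟩⟨e_k|`,
`(1/√2)|0⟩⟨1|⊗|f_k⟩⟨e_k|`, `(1/√2)|1⟩⟨−|⊗|f_k⟩⟨e_k|` on `ℂ² ⊗ ℂ^d`. -/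
noncomputable def EOp {d : ℕ} (e f : Fin d → Fin d → ℂ) :
    Fin 4 × Fin d → Matrix (Fin 2 × Fin d) (Fin 2 × Fin d) ℂ :=
  fun p =>
    (Real.sqrt 2 : ℂ)⁻¹ •
      (![vecMulVec ket0 (star ket0) ⊗ₖ vecMulVec (e p.2) (star (e p.2)),
         vecMulVec ket1 (star ketP) ⊗ₖ vecMulVec (e p.2) (star (e p.2)),
         vecMulVec ket0 (star ket1) ⊗ₖ vecMulVec (f p.2) (star (e p.2)),
         vecMulVec ket1 (star ketM) ⊗ₖ vecMulVec (f p.2) (star (e p.2))] p.1)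

/- ### Auxiliary lemmas -/

namespace Stmt13Aux

variable {d : ℕ}

noncomputable def tens (u : Fin 2 → ℂ) (x : Fin d → ℂ) : Fin 2 × Fin d → ℂ :=
  fun p => u p.1 * x p.2

lemma kron_mulVec (u v : Fin 2 → ℂ) (x y : Fin d → ℂ) (ψ : Fin 2 × Fin d → ℂ) :
    (vecMulVec u (star v) ⊗ₖ vecMulVec x (star y)) *ᵥ ψ
      = (star (tens v y) ⬝ᵥ ψ) • tens u x := by
  ext ⟨i, m⟩
  simp only [mulVec, dotProduct, kroneckerMap_apply, vecMulVec_apply, Pi.star_apply,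
    Pi.smul_apply, smul_eq_mul, tens, Fintype.sum_prod_type]
  rw [Finset.sum_mul]
  refine Finset.sum_congr rfl fun j _ => ?_
  rw [Finset.sum_mul]
  refine Finset.sum_congr rfl fun n _ => ?_
  simp only [Pi.star_apply, star_mul']
  ring

lemma dot_tens (u u' : Fin 2 → ℂ) (x x' : Fin d → ℂ) :
    star (tens u x) ⬝ᵥ tens u' x' = (star u ⬝ᵥ u') * (star x ⬝ᵥ x') := by
  simp only [dotProduct, tens, Pi.star_apply, Fintype.sum_prod_type, star_mul',
    Finset.sum_mul, Finset.mul_sum]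
  rw [Finset.sum_comm]
  exact Finset.sum_congr rfl fun n _ => Finset.sum_congr rfl fun j _ => by ring

lemma rankone_conj {m n : Type*} [Fintype m] [Fintype n]
    (E : Matrix m n ℂ) (ψ : n → ℂ) :
    E * vecMulVec ψ (star ψ) * Eᴴ = vecMulVec (E *ᵥ ψ) (star (E *ᵥ ψ)) := by
  ext i j
  simp only [mul_apply, vecMulVec_apply, conjTranspose_apply, mulVec, dotProduct,
    Pi.star_apply, star_sum, star_mul']
  rw [Finset.sum_mul_sum, Finset.sum_comm]
  refine Finset.sum_congr rfl fun a _ => ?_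
  rw [Finset.sum_mul]
  exact Finset.sum_congr rfl fun b _ => by ring

lemma channel_rankone {ι m n : Type*} [Fintype ι] [Fintype m] [Fintype n]
    (E : ι → Matrix m n ℂ) (ψ : n → ℂ) :
    channelApply E (vecMulVec ψ (star ψ))
      = ∑ k, vecMulVec (E k *ᵥ ψ) (star (E k *ᵥ ψ)) := by
  unfold channelApply
  exact Finset.sum_congr rfl fun k _ => rankone_conj (E k) ψ

lemma trace_rankone_sums {ι κ m : Type*} [Fintype ι] [Fintype κ] [Fintype m]
    (x : ι → m → ℂ) (y : κ → m → ℂ) :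
    ((∑ j, vecMulVec (x j) (star (x j))) * (∑ k, vecMulVec (y k) (star (y k)))).trace
      = ((∑ j, ∑ k, Complex.normSq (star (x j) ⬝ᵥ y k) : ℝ) : ℂ) := by
  rw [Finset.sum_mul]
  rw [trace_sum]
  push_cast
  refine Finset.sum_congr rfl fun j _ => ?_
  rw [Finset.mul_sum, trace_sum]
  refine Finset.sum_congr rfl fun k _ => ?_
  have : vecMulVec (x j) (star (x j)) * vecMulVec (y k) (star (y k))
      = (star (x j) ⬝ᵥ y k) • vecMulVec (x j) (star (y k)) := by
    ext i i'
    simp only [mul_apply, vecMulVec_apply, Pi.star_apply, Matrix.smul_apply, dotProduct,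
      smul_eq_mul, Finset.sum_mul, Finset.mul_sum]
    refine Finset.sum_congr rfl fun a _ => by ring
  rw [this, trace_smul]
  have ht : (vecMulVec (x j) (star (y k))).trace = star (y k) ⬝ᵥ x j := by
    simp [trace, vecMulVec_apply, dotProduct, diag, mul_comm]
  rw [ht]
  rw [Complex.normSq_eq_conj_mul_self]
  have : star (y k) ⬝ᵥ x j = starRingEnd ℂ (star (x j) ⬝ᵥ y k) := by
    simp [dotProduct, map_sum, mul_comm]
  rw [this]
  simp [smul_eq_mul, mul_comm]

lemma kron_conjT {m n p q : Type*} [Fintype m] [Fintype n] [Fintype p] [Fintype q]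
    (A : Matrix m n ℂ) (B : Matrix p q ℂ) : (A ⊗ₖ B)ᴴ = Aᴴ ⊗ₖ Bᴴ := by
  ext ⟨i, a⟩ ⟨j, b⟩
  simp only [conjTranspose_apply, kroneckerMap_apply, star_mul']

lemma vmv_conjT {m n : Type*} (u : m → ℂ) (v : n → ℂ) :
    (vecMulVec u (star v))ᴴ = vecMulVec v (star u) := by
  ext i j
  simp [vecMulVec_apply, conjTranspose_apply, mul_comm]

lemma vmv_mul {m n p : Type*} [Fintype n] (a : m → ℂ) (b c : n → ℂ) (g : p → ℂ) :
    vecMulVec a (star b) * vecMulVec c (star g) = (star b ⬝ᵥ c) • vecMulVec a (star g) := by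
  ext i j
  simp only [mul_apply, vecMulVec_apply, Pi.star_apply, Matrix.smul_apply, dotProduct, smul_eq_mul,
    Finset.sum_mul]
  exact Finset.sum_congr rfl fun k _ => by ring

lemma kron_sum_left {m n p q ι : Type*} [Fintype ι] (A : ι → Matrix m n ℂ) (B : Matrix p q ℂ) :
    (∑ k, A k ⊗ₖ B) = (∑ k, A k) ⊗ₖ B := by
  ext ⟨i, a⟩ ⟨j, b⟩
  simp [Matrix.sum_apply, kroneckerMap_apply, Finset.sum_mul]

lemma kron_sum_right {m n p q ι : Type*} [Fintype ι] (A : Matrix m n ℂ) (B : ι → Matrix p q ℂ) :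
    (∑ k, A ⊗ₖ B k) = A ⊗ₖ (∑ k, B k) := by
  ext ⟨i, a⟩ ⟨j, b⟩
  simp [Matrix.sum_apply, kroneckerMap_apply, Finset.mul_sum]

lemma sqrt2c_ne : ((Real.sqrt 2 : ℂ))⁻¹ ≠ 0 := by
  simp only [ne_eq, inv_eq_zero, Complex.ofReal_eq_zero]
  positivity

lemma sqrt2c_sq : ((Real.sqrt 2 : ℝ) : ℂ) * ((Real.sqrt 2 : ℝ) : ℂ) = 2 := by
  rw [← Complex.ofReal_mul, Real.mul_self_sqrt (by norm_num)]
  norm_num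

lemma sqrt2c_inv_sq : ((Real.sqrt 2 : ℂ))⁻¹ * ((Real.sqrt 2 : ℂ))⁻¹ = (2 : ℂ)⁻¹ := by
  rw [← mul_inv, sqrt2c_sq]

lemma star_sqrt2c_inv : star ((Real.sqrt 2 : ℂ))⁻¹ = ((Real.sqrt 2 : ℂ))⁻¹ := by
  rw [star_inv₀, Complex.star_def, Complex.conj_ofReal]

lemma completeness (e : Fin d → Fin d → ℂ)
    (he : ∀ k l, star (e k) ⬝ᵥ e l = if k = l then 1 else 0) :
    (∑ k, vecMulVec (e k) (star (e k))) = (1 : Matrix (Fin d) (Fin d) ℂ) := by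
  have hM : (Matrix.of e) * (Matrix.of e)ᴴ = 1 := by
    ext k l
    simp only [mul_apply, conjTranspose_apply, of_apply, one_apply]
    have := he l k
    simp only [dotProduct, Pi.star_apply] at this
    rw [show ∑ j, e k j * star (e l j) = ∑ j, star (e l j) * e k j from
      Finset.sum_congr rfl fun j _ => mul_comm _ _, this]
    by_cases h : k = l <;> simp [h, eq_comm]
  have hM2 : (Matrix.of e)ᴴ * (Matrix.of e) = 1 := mul_eq_one_comm.mp hM
  ext i j
  have h2 := congrArg (fun M => M i j) hM2
  simp only [mul_apply, conjTranspose_apply, of_apply, one_apply] at h2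
  have := congrArg star h2
  simp only [star_sum, star_mul', star_star] at this
  simp only [Matrix.sum_apply, vecMulVec_apply, Pi.star_apply]
  rw [this]
  by_cases h : i = j <;> simp [h, one_apply]

lemma dot_ket0 : star ket0 ⬝ᵥ ket0 = (1 : ℂ) := by
  simp [ket0, dotProduct, Fin.sum_univ_two]

lemma dot_ket1 : star ket1 ⬝ᵥ ket1 = (1 : ℂ) := by
  simp [ket1, dotProduct, Fin.sum_univ_two]

lemma z_eval (c : ℂ) (u v u' v' : Fin 2 → ℂ) (x y x' y' : Fin d → ℂ)
    (ψ φ : Fin 2 × Fin d → ℂ) :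
    star ((c • (vecMulVec u (star v) ⊗ₖ vecMulVec x (star y))) *ᵥ ψ) ⬝ᵥ
      ((c • (vecMulVec u' (star v') ⊗ₖ vecMulVec x' (star y'))) *ᵥ φ)
    = (star c * c) * star (star (tens v y) ⬝ᵥ ψ) * (star (tens v' y') ⬝ᵥ φ) *
        ((star u ⬝ᵥ u') * (star x ⬝ᵥ x')) := by
  rw [Matrix.smul_mulVec, Matrix.smul_mulVec, kron_mulVec, kron_mulVec]
  simp only [star_smul, smul_dotProduct, dotProduct_smul, smul_eq_mul]
  rw [dot_tens]
  ring

lemma tensP (x : Fin d → ℂ) :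
    tens ketP x = (Real.sqrt 2 : ℂ)⁻¹ • tens ket0 x + (Real.sqrt 2 : ℂ)⁻¹ • tens ket1 x := by
  ext ⟨j, n⟩
  fin_cases j <;> simp [tens, ketP, ket0, ket1]

lemma tensM (x : Fin d → ℂ) :
    tens ketM x = (Real.sqrt 2 : ℂ)⁻¹ • tens ket0 x - (Real.sqrt 2 : ℂ)⁻¹ • tens ket1 x := by
  ext ⟨j, n⟩
  fin_cases j <;> simp [tens, ketM, ket0, ket1]


lemma dotP (x : Fin d → ℂ) (w : Fin 2 × Fin d → ℂ) :
    star (tens ketP x) ⬝ᵥ w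
      = (Real.sqrt 2 : ℂ)⁻¹ * (star (tens ket0 x) ⬝ᵥ w + star (tens ket1 x) ⬝ᵥ w) := by
  rw [tensP, star_add, star_smul, star_smul, add_dotProduct, smul_dotProduct, smul_dotProduct,
    star_sqrt2c_inv]
  simp only [smul_eq_mul]
  ring

lemma dotM (x : Fin d → ℂ) (w : Fin 2 × Fin d → ℂ) :
    star (tens ketM x) ⬝ᵥ w
      = (Real.sqrt 2 : ℂ)⁻¹ * (star (tens ket0 x) ⬝ᵥ w - star (tens ket1 x) ⬝ᵥ w) := by
  rw [tensM, star_sub, star_smul, star_smul, sub_dotProduct, smul_dotProduct, smul_dotProduct,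
    star_sqrt2c_inv]
  simp only [smul_eq_mul]
  ring

lemma recon (e : Fin d → Fin d → ℂ)
    (he : ∀ k l, star (e k) ⬝ᵥ e l = if k = l then 1 else 0)
    (g : Fin d → ℂ) (hg : ∀ k, ∑ i, star (e k i) * g i = 0) : g = 0 := by
  have hM : (Matrix.of e) * (Matrix.of e)ᴴ = 1 := by
    ext k l
    simp only [mul_apply, conjTranspose_apply, of_apply, one_apply]
    have := he l k
    simp only [dotProduct, Pi.star_apply] at this
    rw [show ∑ j, e k j * star (e l j) = ∑ j, star (e l j) * e k j from
      Finset.sum_congr rfl fun j _ => mul_comm _ _, this]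
    by_cases h : k = l <;> simp [h, eq_comm]
  have hM2 : (Matrix.of e)ᴴ * (Matrix.of e) = 1 := mul_eq_one_comm.mp hM
  have hT := congrArg Matrix.transpose hM2
  rw [transpose_mul, transpose_one] at hT
  have hgv : ((Matrix.of e)ᴴ)ᵀ *ᵥ g = 0 := by
    funext k
    simpa [mulVec, dotProduct, transpose_apply, conjTranspose_apply, of_apply] using hg k
  calc g = ((Matrix.of e)ᵀ * ((Matrix.of e)ᴴ)ᵀ) *ᵥ g := by rw [hT, one_mulVec]
    _ = (Matrix.of e)ᵀ *ᵥ (((Matrix.of e)ᴴ)ᵀ *ᵥ g) := by rw [mulVec_mulVec]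
    _ = 0 := by rw [hgv, mulVec_zero]

lemma coeff0 (e : Fin d → Fin d → ℂ) (k : Fin d) (w : Fin 2 × Fin d → ℂ) :
    star (tens ket0 (e k)) ⬝ᵥ w = ∑ n, star (e k n) * w (0, n) := by
  simp only [dotProduct, tens, Pi.star_apply, Fintype.sum_prod_type, Fin.sum_univ_two,
    star_mul', ket0, Matrix.cons_val_zero, Matrix.cons_val_one, Matrix.head_cons,
    star_one, star_zero, mul_one, mul_zero, zero_mul, add_zero, Finset.sum_const_zero]
  exact Finset.sum_congr rfl fun n _ => by ring

lemma coeff1 (e : Fin d → Fin d → ℂ) (k : Fin d) (w : Fin 2 × Fin d → ℂ) :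
    star (tens ket1 (e k)) ⬝ᵥ w = ∑ n, star (e k n) * w (1, n) := by
  simp only [dotProduct, tens, Pi.star_apply, Fintype.sum_prod_type, Fin.sum_univ_two,
    star_mul', ket1, Matrix.cons_val_zero, Matrix.cons_val_one, Matrix.head_cons,
    star_one, star_zero, mul_one, mul_zero, zero_mul, zero_add, Finset.sum_const_zero]
  exact Finset.sum_congr rfl fun n _ => by ring

lemma nonzero_coeff (e : Fin d → Fin d → ℂ)
    (he : ∀ k l, star (e k) ⬝ᵥ e l = if k = l then 1 else 0)
    (ψ : Fin 2 × Fin d → ℂ) (hψ : star ψ ⬝ᵥ ψ = 1) :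
    ∃ k, star (tens ket0 (e k)) ⬝ᵥ ψ ≠ 0 ∨ star (tens ket1 (e k)) ⬝ᵥ ψ ≠ 0 := by
  by_contra hno
  push_neg at hno
  have h0 : (fun n => ψ (0, n)) = 0 := by
    refine recon e he _ fun k => ?_
    rw [← coeff0 e k ψ]
    exact (hno k).1
  have h1 : (fun n => ψ (1, n)) = 0 := by
    refine recon e he _ fun k => ?_
    rw [← coeff1 e k ψ]
    exact (hno k).2
  have : ψ = 0 := by
    funext ⟨j, n⟩
    fin_cases j
    · exact congrFun h0 n
    · exact congrFun h1 n
  rw [this] at hψ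
  simp at hψ

end Stmt13Aux

open Stmt13Aux in
theorem stmt_13 (d : ℕ) (e f : Fin d → Fin d → ℂ)
    (he : ∀ k l, star (e k) ⬝ᵥ e l = if k = l then 1 else 0)
    (hf : ∀ k l, star (f k) ⬝ᵥ f l = if k = l then 1 else 0)
    (hef : ∀ k l, star (e k) ⬝ᵥ f l ≠ 0) :
    (∑ p, (EOp e f p)ᴴ * EOp e f p = 1) ∧
    (∀ ψ φ : Fin 2 × Fin d → ℂ, star ψ ⬝ᵥ ψ = 1 → star φ ⬝ᵥ φ = 1 →
      (channelApply (EOp e f) (vecMulVec ψ (star ψ)) *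
        channelApply (EOp e f) (vecMulVec φ (star φ))).trace ≠ 0) := by
  constructor
  · -- completeness of the Kraus family
    set W : Fin 4 → Matrix (Fin 2) (Fin 2) ℂ :=
      ![vecMulVec ket0 (star ket0), vecMulVec ketP (star ketP),
        vecMulVec ket1 (star ket1), vecMulVec ketM (star ketM)] with hW
    have key : ∀ (t : Fin 4) (k : Fin d), (EOp e f (t, k))ᴴ * EOp e f (t, k)
        = (2 : ℂ)⁻¹ • (W t ⊗ₖ vecMulVec (e k) (star (e k))) := by
      intro t k
      have base : ∀ (u v : Fin 2 → ℂ) (x : Fin d → ℂ), star u ⬝ᵥ u = 1 → star x ⬝ᵥ x = 1 →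
          ((Real.sqrt 2 : ℂ)⁻¹ • (vecMulVec u (star v) ⊗ₖ vecMulVec x (star (e k))))ᴴ *
          ((Real.sqrt 2 : ℂ)⁻¹ • (vecMulVec u (star v) ⊗ₖ vecMulVec x (star (e k))))
            = (2 : ℂ)⁻¹ • (vecMulVec v (star v) ⊗ₖ vecMulVec (e k) (star (e k))) := by
        intro u v x hu hx
        rw [conjTranspose_smul, smul_mul_smul_comm, star_sqrt2c_inv, sqrt2c_inv_sq,
          kron_conjT, vmv_conjT, vmv_conjT, ← mul_kronecker_mul, vmv_mul, vmv_mul, hu, hx,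
          one_smul, one_smul]
      fin_cases t
      · exact base ket0 ket0 (e k) dot_ket0 (by rw [he k k]; simp)
      · exact base ket1 ketP (e k) dot_ket1 (by rw [he k k]; simp)
      · exact base ket0 ket1 (f k) dot_ket0 (by rw [hf k k]; simp)
      · exact base ket1 ketM (f k) dot_ket1 (by rw [hf k k]; simp)
    rw [Fintype.sum_prod_type]
    have : ∀ t : Fin 4, (∑ k : Fin d, (EOp e f (t, k))ᴴ * EOp e f (t, k))
        = (2 : ℂ)⁻¹ • (W t ⊗ₖ (1 : Matrix (Fin d) (Fin d) ℂ)) := by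
      intro t
      simp only [key]
      rw [← Finset.smul_sum, kron_sum_right, completeness e he]
    simp only [this]
    rw [← Finset.smul_sum, kron_sum_left]
    have hWsum : (∑ t, W t) = (2 : ℂ) • (1 : Matrix (Fin 2) (Fin 2) ℂ) := by
      have h2 := sqrt2c_inv_sq
      ext i j
      fin_cases i <;> fin_cases j <;>
        simp [hW, Fin.sum_univ_four, vecMulVec_apply, ket0, ket1, ketP, ketM, one_apply,
          star_sqrt2c_inv, Matrix.sum_apply] <;>
      · rw [h2]; norm_num
    rw [hWsum, smul_kronecker, one_kronecker_one, smul_smul]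
    norm_num
  · intro ψ φ hψ hφ
    rw [channel_rankone, channel_rankone, trace_rankone_sums]
    suffices hex : ∃ p q, star (EOp e f p *ᵥ ψ) ⬝ᵥ (EOp e f q *ᵥ φ) ≠ 0 by
      obtain ⟨p, q, hpq⟩ := hex
      have hpos : 0 < ∑ j, ∑ k,
          Complex.normSq (star (EOp e f j *ᵥ ψ) ⬝ᵥ (EOp e f k *ᵥ φ)) := by
        refine Finset.sum_pos' (fun j _ => Finset.sum_nonneg fun k _ => Complex.normSq_nonneg _)
          ⟨p, Finset.mem_univ p, ?_⟩
        refine Finset.sum_pos' (fun k _ => Complex.normSq_nonneg _)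
          ⟨q, Finset.mem_univ q, ?_⟩
        exact Complex.normSq_pos.mpr hpq
      exact_mod_cast hpos.ne'
    by_contra hall
    push_neg at hall
    have hcne : ((Real.sqrt 2 : ℂ))⁻¹ ≠ 0 := sqrt2c_ne
    have hcc : star ((Real.sqrt 2 : ℂ))⁻¹ * ((Real.sqrt 2 : ℂ))⁻¹ ≠ 0 := by
      rw [star_sqrt2c_inv]; exact mul_ne_zero hcne hcne
    have hfe : ∀ k l, star (f k) ⬝ᵥ e l ≠ 0 := by
      intro k l h
      apply hef l k
      have hsw : star (star (f k) ⬝ᵥ e l) = star (e l) ⬝ᵥ f k := by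
        simp [dotProduct, star_sum, star_mul', star_star, mul_comm]
      rw [← hsw, h, star_zero]
    have h1 : ∀ k l, star (tens ket0 (e k)) ⬝ᵥ ψ = 0 ∨ star (tens ket1 (e l)) ⬝ᵥ φ = 0 := by
      intro k l
      by_contra hcon
      push_neg at hcon
      have h := hall (0, k) (2, l)
      rw [show EOp e f (0, k) = (Real.sqrt 2 : ℂ)⁻¹ •
            (vecMulVec ket0 (star ket0) ⊗ₖ vecMulVec (e k) (star (e k))) from rfl,
          show EOp e f (2, l) = (Real.sqrt 2 : ℂ)⁻¹ •
            (vecMulVec ket0 (star ket1) ⊗ₖ vecMulVec (f l) (star (e l))) from rfl,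
          z_eval] at h
      exact (mul_ne_zero (mul_ne_zero (mul_ne_zero hcc (star_ne_zero.mpr hcon.1)) hcon.2)
        (mul_ne_zero (by rw [dot_ket0]; exact one_ne_zero) (hef k l))) h
    have h2 : ∀ k l, star (tens ket1 (e k)) ⬝ᵥ ψ = 0 ∨ star (tens ket0 (e l)) ⬝ᵥ φ = 0 := by
      intro k l
      by_contra hcon
      push_neg at hcon
      have h := hall (2, k) (0, l)
      rw [show EOp e f (2, k) = (Real.sqrt 2 : ℂ)⁻¹ •
            (vecMulVec ket0 (star ket1) ⊗ₖ vecMulVec (f k) (star (e k))) from rfl,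
          show EOp e f (0, l) = (Real.sqrt 2 : ℂ)⁻¹ •
            (vecMulVec ket0 (star ket0) ⊗ₖ vecMulVec (e l) (star (e l))) from rfl,
          z_eval] at h
      exact (mul_ne_zero (mul_ne_zero (mul_ne_zero hcc (star_ne_zero.mpr hcon.1)) hcon.2)
        (mul_ne_zero (by rw [dot_ket0]; exact one_ne_zero) (hfe k l))) h
    have h3 : ∀ k l, star (tens ket0 (e k)) ⬝ᵥ ψ + star (tens ket1 (e k)) ⬝ᵥ ψ = 0 ∨
        star (tens ket0 (e l)) ⬝ᵥ φ - star (tens ket1 (e l)) ⬝ᵥ φ = 0 := by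
      intro k l
      by_contra hcon
      push_neg at hcon
      have h := hall (1, k) (3, l)
      rw [show EOp e f (1, k) = (Real.sqrt 2 : ℂ)⁻¹ •
            (vecMulVec ket1 (star ketP) ⊗ₖ vecMulVec (e k) (star (e k))) from rfl,
          show EOp e f (3, l) = (Real.sqrt 2 : ℂ)⁻¹ •
            (vecMulVec ket1 (star ketM) ⊗ₖ vecMulVec (f l) (star (e l))) from rfl,
          z_eval, dotP, dotM] at h
      exact (mul_ne_zero (mul_ne_zero
          (mul_ne_zero hcc (star_ne_zero.mpr (mul_ne_zero hcne hcon.1)))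
          (mul_ne_zero hcne hcon.2))
        (mul_ne_zero (by rw [dot_ket1]; exact one_ne_zero) (hef k l))) h
    obtain ⟨k, hk⟩ := nonzero_coeff e he ψ hψ
    obtain ⟨l, hl⟩ := nonzero_coeff e he φ hφ
    rcases hk with hk | hk <;> rcases hl with hl | hl
    · have hb0 : ∀ m, star (tens ket1 (e m)) ⬝ᵥ ψ = 0 := fun m => (h2 m l).resolve_right hl
      have hb'0 : ∀ m, star (tens ket1 (e m)) ⬝ᵥ φ = 0 := fun m => (h1 k m).resolve_left hk
      rcases h3 k l with h | h
      · rw [hb0 k, add_zero] at h; exact hk h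
      · rw [hb'0 l, sub_zero] at h; exact hl h
    · rcases h1 k l with h | h
      exacts [hk h, hl h]
    · rcases h2 k l with h | h
      exacts [hk h, hl h]
    · have ha0 : ∀ m, star (tens ket0 (e m)) ⬝ᵥ ψ = 0 := fun m => (h1 m l).resolve_right hl
      have ha'0 : ∀ m, star (tens ket0 (e m)) ⬝ᵥ φ = 0 := fun m => (h2 k m).resolve_left hk
      rcases h3 k l with h | h
      · rw [ha0 k, zero_add] at h; exact hk h
      · rw [ha'0 l, zero_sub, neg_eq_zero] at h; exact hl h
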